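/- For every integer l ≥ 0, the sum over j ∈ ℕ (j ≥ 0, j ≠ l) of 1/((2j+1)² − (2l+1)²) equals 1/(4(2l+1)²). Equivalently, ∑_{j≠l} (1/(j−l) − 1/(j+l+1)) = 1/(2l+1), where the sum runs over j ∈ {0,1,2,…} \ {l}. -/

import Mathlib

open Filter Finset Topology

noncomputable def gl (l : ℕ) : ℕ → ℝ :=
  fun j => if j = l then 0 else 1/((j:ℝ)-l) - 1/((j:ℝ)+l+1)

noncomputable def fl (l : ℕ) : ℕ → ℝ :=
  fun j => 1 / ((2*(j:ℝ)+1)^2 - (2*(l:ℝ)+1)^2)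

lemma fl_eq (l : ℕ) : ∀ j, gl l j = (4*(2*(l:ℝ)+1)) * fl l j := by
  intro j
  unfold gl fl
  by_cases h : j = l
  · subst h; simp
  · rw [if_neg h]
    have h1 : (j:ℝ) - l ≠ 0 := by
      intro hc
      exact h (Nat.cast_injective (by linarith : (j:ℝ) = l))
    have h2 : (j:ℝ) + l + 1 ≠ 0 := by positivity
    have h3 : (2*(j:ℝ)+1)^2 - (2*(l:ℝ)+1)^2 = 4*((j:ℝ)-l)*((j:ℝ)+l+1) := by ring
    rw [h3]
    field_simp
    ring

lemma summable_fl (l : ℕ) : Summable (fl l) := by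
  rw [← summable_nat_add_iff (2*l+1)]
  have hs : Summable (fun j : ℕ => 1/((j:ℝ)+(2*l+1))^2) := by
    have := (summable_nat_add_iff (f := fun j : ℕ => 1/(j:ℝ)^2) (2*l+1)).2
      (Real.summable_one_div_nat_pow.mpr (by norm_num))
    simpa using this
  refine Summable.of_norm_bounded hs ?_
  intro j
  unfold fl
  have hj : ((j + (2*l+1) : ℕ) : ℝ) = (j:ℝ) + 2*l+1 := by push_cast; ring
  rw [hj]
  have hd : ((j:ℝ)+2*l+1)^2 ≤ (2*((j:ℝ)+2*l+1)+1)^2 - (2*(l:ℝ)+1)^2 := by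
    have : (0:ℝ) ≤ j := Nat.cast_nonneg j
    nlinarith
  have hpos : (0:ℝ) < ((j:ℝ)+2*l+1)^2 := by positivity
  have hD : (0:ℝ) < (2*((j:ℝ)+2*l+1)+1)^2 - (2*(l:ℝ)+1)^2 := lt_of_lt_of_le hpos hd
  rw [Real.norm_eq_abs, abs_of_nonneg (le_of_lt (by positivity))]
  have := one_div_le_one_div_of_le hpos hd
  calc 1/((2*((j:ℝ)+2*l+1)+1)^2 - (2*(l:ℝ)+1)^2) ≤ 1/((j:ℝ)+2*l+1)^2 := this
    _ = 1/((j:ℝ)+(2*l+1))^2 := by ring_nf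

lemma partial_sum (l : ℕ) : ∀ n, l+1 ≤ n →
    ∑ j ∈ range n, gl l j
      = 1/(2*(l:ℝ)+1) - ∑ j ∈ range (2*l+1), 1/((n:ℝ)-l+j) := by
  intro n hn
  induction n with
  | zero => omega
  | succ n ih =>
    rcases Nat.lt_or_ge n (l+1) with h | h
    · -- base case: n = l
      have hnl : n = l := by omega
      subst hnl
      have hL : ∑ j ∈ range (n+1), gl n j
          = ∑ j ∈ range n, (1/((j:ℝ)-n) - 1/((j:ℝ)+n+1)) := by
        rw [sum_range_succ]
        have : gl n n = 0 := by unfold gl; simp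
        rw [this, add_zero]
        refine Finset.sum_congr rfl fun j hj => ?_
        have hj' := Finset.mem_range.mp hj
        unfold gl
        rw [if_neg (by omega : j ≠ n)]
      have hA : ∑ j ∈ range n, 1/((j:ℝ)-n) = -∑ j ∈ range n, 1/((j:ℝ)+1) := by
        rw [← Finset.sum_range_reflect (fun j => 1/((j:ℝ)-n)) n, ← Finset.sum_neg_distrib]
        refine Finset.sum_congr rfl fun j hj => ?_
        have hj' : j < n := Finset.mem_range.mp hj
        have : ((n - 1 - j : ℕ) : ℝ) = (n:ℝ) - 1 - j := by
          have h1 : 1 + j ≤ n := by omega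
          push_cast [Nat.sub_sub, Nat.cast_sub h1]
          ring
        rw [this, show (n:ℝ) - 1 - (j:ℝ) - n = -((j:ℝ)+1) by ring, div_neg]
      have hB : ∑ j ∈ range (2*n+1), 1/(((n:ℝ)+1) - n + j)
          = ∑ j ∈ range n, 1/((j:ℝ)+1)
            + (∑ j ∈ range n, 1/((j:ℝ)+n+1) + 1/(2*(n:ℝ)+1)) := by
        have h1 : 2*n+1 = n + (n+1) := by ring
        rw [h1, Finset.sum_range_add, sum_range_succ]
        congr 1
        · refine Finset.sum_congr rfl fun j hj => ?_
          ring_nf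
        congr 1
        · refine Finset.sum_congr rfl fun j hj => ?_
          push_cast
          ring_nf
        · push_cast
          ring_nf
      rw [hL, Finset.sum_sub_distrib, hA]
      push_cast
      rw [hB]
      ring
    · rw [sum_range_succ, ih h]
      have hg : gl l n = 1/((n:ℝ)-l) - 1/((n:ℝ)+l+1) := by
        unfold gl; rw [if_neg (by omega)]
      rw [hg]
      have key : ∑ j ∈ range (2*l+1), 1/((n:ℝ)-l+j) - ∑ j ∈ range (2*l+1), 1/(((n:ℕ)+1:ℕ)-(l:ℝ)+j)
          = 1/((n:ℝ)-l) - 1/((n:ℝ)+l+1) := by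
        rw [← Finset.sum_sub_distrib]
        have : ∀ j ∈ range (2*l+1), 1/((n:ℝ)-l+j) - 1/(((n:ℕ)+1:ℕ)-(l:ℝ)+j)
            = (fun i : ℕ => 1/((n:ℝ)-l+i)) j - (fun i : ℕ => 1/((n:ℝ)-l+i)) (j+1) := by
          intro j _; push_cast; ring_nf
        rw [Finset.sum_congr rfl this, Finset.sum_range_sub']
        push_cast; ring_nf
      push_cast at key ⊢
      linarith

lemma tendsto_tail (l : ℕ) :
    Tendsto (fun n : ℕ => ∑ j ∈ range (2*l+1), 1/((n:ℝ)-l+j)) atTop (𝓝 0) := by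
  have h0 : (0:ℝ) = ∑ j ∈ range (2*l+1), (0:ℝ) := by simp
  rw [h0]
  apply tendsto_finset_sum
  intro j _
  have ht : Tendsto (fun n : ℕ => (n:ℝ)-l+j) atTop atTop := by
    apply tendsto_atTop_add_const_right
    apply tendsto_atTop_add_const_right
    exact tendsto_natCast_atTop_atTop
  simpa [one_div, Pi.inv_def] using ht.inv_tendsto_atTop

lemma summable_gl (l : ℕ) : Summable (gl l) :=
  ((summable_fl l).mul_left (4*(2*(l:ℝ)+1))).congr (fun j => (fl_eq l j).symm)

lemma hasSum_gl (l : ℕ) : HasSum (gl l) (1/(2*(l:ℝ)+1)) := by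
  rw [Summable.hasSum_iff_tendsto_nat (summable_gl l)]
  have h1 : Tendsto (fun n : ℕ =>
      1/(2*(l:ℝ)+1) - ∑ j ∈ range (2*l+1), 1/((n:ℝ)-l+j)) atTop (𝓝 (1/(2*(l:ℝ)+1))) := by
    simpa using (tendsto_const_nhds.sub (tendsto_tail l))
  refine Tendsto.congr' ?_ h1
  filter_upwards [eventually_ge_atTop (l+1)] with n hn
  exact (partial_sum l n hn).symm

lemma hasSum_fl (l : ℕ) : HasSum (fl l) (1/(4*(2*(l:ℝ)+1)^2)) := by
  have h2 : (2*(l:ℝ)+1) ≠ 0 := by positivity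
  have h := (hasSum_gl l).mul_left (4*(2*(l:ℝ)+1))⁻¹
  have he : (fun j => (4*(2*(l:ℝ)+1))⁻¹ * gl l j) = fl l := by
    funext j; rw [fl_eq]; field_simp
  have h3 : (4*(2*(l:ℝ)+1))⁻¹ * (1/(2*(l:ℝ)+1)) = 1/(4*(2*(l:ℝ)+1)^2) := by
    field_simp
  rw [he, h3] at h
  exact h

/-- Second-order perturbation sum: ∑_{j≠l} 1/((2j+1)² − (2l+1)²) = 1/(4(2l+1)²),
equivalently ∑_{j≠l} (1/(j−l) − 1/(j+l+1)) = 1/(2l+1). -/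
theorem stmt_3 (l : ℕ) :
    (∑' j : {j : ℕ // j ≠ l},
        (1 : ℝ) / ((2 * (j : ℕ) + 1) ^ 2 - (2 * (l : ℝ) + 1) ^ 2))
      = 1 / (4 * (2 * (l : ℝ) + 1) ^ 2)
    ∧ (∑' j : {j : ℕ // j ≠ l},
        ((1 : ℝ) / ((j : ℕ) - (l : ℝ)) - 1 / ((j : ℕ) + (l : ℝ) + 1)))
      = 1 / (2 * (l : ℝ) + 1) := by
  constructor
  · have e0 : (∑' j : {j : ℕ // j ≠ l},
        (1 : ℝ) / ((2 * (j : ℕ) + 1) ^ 2 - (2 * (l : ℝ) + 1) ^ 2))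
        = ∑' j : {j : ℕ // j ≠ l}, fl l (j : ℕ) := by
      refine tsum_congr fun j => ?_
      unfold fl; norm_num
    have e1 : (∑' j : {j : ℕ // j ≠ l}, fl l (j : ℕ))
        = ∑' j : ↥{j : ℕ | j ≠ l}, fl l (j : ℕ) := rfl
    rw [e0, e1, tsum_subtype_eq_of_support_subset (f := fl l) (s := {j : ℕ | j ≠ l}) ?_]
    · exact (hasSum_fl l).tsum_eq
    · intro j hj
      simp only [Function.mem_support, fl] at hj
      simp only [Set.mem_setOf_eq]
      intro hc
      subst hc
      simp at hj
  · have e0 : (∑' j : {j : ℕ // j ≠ l},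
        ((1 : ℝ) / ((j : ℕ) - (l : ℝ)) - 1 / ((j : ℕ) + (l : ℝ) + 1)))
        = ∑' j : {j : ℕ // j ≠ l}, gl l (j : ℕ) := by
      refine tsum_congr fun j => ?_
      unfold gl
      rw [if_neg j.2]
    have e1 : (∑' j : {j : ℕ // j ≠ l}, gl l (j : ℕ))
        = ∑' j : ↥{j : ℕ | j ≠ l}, gl l (j : ℕ) := rfl
    rw [e0, e1, tsum_subtype_eq_of_support_subset (f := gl l) (s := {j : ℕ | j ≠ l}) ?_]
    · exact (hasSum_gl l).tsum_eq
    · intro j hj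
      simp only [Function.mem_support, gl] at hj
      simp only [Set.mem_setOf_eq]
      intro hc
      subst hc
      simp at hj
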